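/- Let H_1, H_2, H_3 be closed subspaces of a Hilbert space H with H_2 ⊆ H_1 ∩ H_3. Then H_1 ∩ H_2^⊥ is orthogonal to H_3 ∩ H_2^⊥ if and only if p_{H_1} ∘ p_{H_3} = p_{H_2}. Moreover, if this holds, then H_2 = H_1 ∩ H_3. -/

import Mathlib

open scoped ComplexInnerProductSpace

lemma aux_mem {H : Type*} [NormedAddCommGroup H] [InnerProductSpace ℂ H] [CompleteSpace H]
    (K H₂ : Submodule ℂ H) [CompleteSpace K] [CompleteSpace H₂] (h : H₂ ≤ K) (ξ : H) :
    ((K.orthogonalProjectionOnto ξ : H) - (H₂.orthogonalProjectionOnto ξ : H)) ∈ K ⊓ H₂ᗮ := by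
  constructor
  · exact sub_mem (K.orthogonalProjectionOnto ξ).2 (h (H₂.orthogonalProjectionOnto ξ).2)
  · intro z hz
    have h1 : ⟪z, ξ - (K.orthogonalProjectionOnto ξ : H)⟫ = 0 := by
      have : ⟪ξ - (K.orthogonalProjectionOnto ξ : H), z⟫ = 0 :=
        Submodule.starProjection_inner_eq_zero ξ z (h hz)
      rw [← inner_conj_symm, this, map_zero]
    have h2 : ⟪z, ξ - (H₂.orthogonalProjectionOnto ξ : H)⟫ = 0 := by
      have : ⟪ξ - (H₂.orthogonalProjectionOnto ξ : H), z⟫ = 0 :=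
        Submodule.starProjection_inner_eq_zero ξ z hz
      rw [← inner_conj_symm, this, map_zero]
    have : ⟪z, ((K.orthogonalProjectionOnto ξ : H) - (H₂.orthogonalProjectionOnto ξ : H))⟫ =
        ⟪z, ξ - (H₂.orthogonalProjectionOnto ξ : H)⟫ - ⟪z, ξ - (K.orthogonalProjectionOnto ξ : H)⟫ := by
      rw [← inner_sub_right]
      congr 1
      abel
    rw [this, h1, h2, sub_zero]

/-- Characterization of conditional orthogonality: for closed subspaces
`H₁, H₂, H₃` of a Hilbert space with `H₂ ⊆ H₁ ∩ H₃`, the subspaces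
`H₁ ∩ H₂^⊥` and `H₃ ∩ H₂^⊥` are orthogonal if and only if
`p_{H₁} ∘ p_{H₃} = p_{H₂}`; moreover, in that case `H₂ = H₁ ∩ H₃`. -/
theorem stmt_1 {H : Type*} [NormedAddCommGroup H] [InnerProductSpace ℂ H] [CompleteSpace H]
    (H₁ H₂ H₃ : Submodule ℂ H)
    (h₁ : IsClosed (H₁ : Set H)) (h₂ : IsClosed (H₂ : Set H)) (h₃ : IsClosed (H₃ : Set H))
    [CompleteSpace H₁] [CompleteSpace H₂] [CompleteSpace H₃]
    (hle : H₂ ≤ H₁ ⊓ H₃) :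
    ((∀ x ∈ H₁ ⊓ H₂ᗮ, ∀ y ∈ H₃ ⊓ H₂ᗮ, ⟪x, y⟫ = 0) ↔
      (∀ ξ : H, (H₁.orthogonalProjectionOnto ((H₃.orthogonalProjectionOnto ξ : H)) : H)
        = (H₂.orthogonalProjectionOnto ξ : H))) ∧
    ((∀ ξ : H, (H₁.orthogonalProjectionOnto ((H₃.orthogonalProjectionOnto ξ : H)) : H)
        = (H₂.orthogonalProjectionOnto ξ : H)) → H₂ = H₁ ⊓ H₃) := by
  have hle₁ : H₂ ≤ H₁ := fun x hx => (hle hx).1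
  have hle₃ : H₂ ≤ H₃ := fun x hx => (hle hx).2
  constructor
  · constructor
    · -- orthogonality → projection identity
      intro horth ξ
      set w : H := (H₃.orthogonalProjectionOnto ξ : H) - (H₂.orthogonalProjectionOnto ξ : H) with hw
      have hwmem : w ∈ H₃ ⊓ H₂ᗮ := aux_mem H₃ H₂ hle₃ ξ
      -- w ⊥ H₁
      have hwH1 : w ∈ H₁ᗮ := by
        intro x hx
        set x' : H := x - (H₂.orthogonalProjectionOnto x : H) with hx'
        have hx'mem : x' ∈ H₁ ⊓ H₂ᗮ := by
          have := aux_mem H₁ H₂ hle₁ x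
          rwa [show (H₁.orthogonalProjectionOnto x : H) = x from Submodule.starProjection_eq_self_iff.2 hx] at this
        have e1 : ⟪x', w⟫ = 0 := horth x' hx'mem w hwmem
        have e2 : ⟪(H₂.orthogonalProjectionOnto x : H), w⟫ = 0 :=
          hwmem.2 _ (H₂.orthogonalProjectionOnto x).2
        have : ⟪x, w⟫ = ⟪(H₂.orthogonalProjectionOnto x : H), w⟫ + ⟪x', w⟫ := by
          rw [← inner_add_left]
          congr 1
          simp [hx']
        rw [this, e1, e2, add_zero]
      have hproj : (H₃.orthogonalProjectionOnto ξ : H)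
          = (H₂.orthogonalProjectionOnto ξ : H) + w := by simp [hw]
      rw [hproj, map_add, Submodule.coe_add,
        show (H₁.orthogonalProjectionOnto (H₂.orthogonalProjectionOnto ξ : H) : H) = _ from
          Submodule.starProjection_eq_self_iff.2 (hle₁ (H₂.orthogonalProjectionOnto ξ).2),
        Submodule.orthogonalProjectionOnto_apply_of_mem_orthogonal hwH1]
      simp
    · -- projection identity → orthogonality
      intro hp x hx y hy
      have hy3 : (H₃.orthogonalProjectionOnto y : H) = y := Submodule.starProjection_eq_self_iff.2 hy.1
      have hy2 : (H₂.orthogonalProjectionOnto y : H) = 0 := by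
        rw [Submodule.orthogonalProjectionOnto_apply_of_mem_orthogonal hy.2]
        simp
      -- ⟪x, y⟫ = ⟪x, P₁ y⟫ since x ∈ H₁
      have hxP : ⟪x, y - (H₁.orthogonalProjectionOnto y : H)⟫ = 0 := by
        have : ⟪y - (H₁.orthogonalProjectionOnto y : H), x⟫ = 0 :=
          Submodule.starProjection_inner_eq_zero y x hx.1
        rw [← inner_conj_symm, this, map_zero]
      have : ⟪x, y⟫ = ⟪x, (H₁.orthogonalProjectionOnto y : H)⟫ := by
        have := hxP
        rw [inner_sub_right, sub_eq_zero] at this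
        exact this
      rw [this]
      have : (H₁.orthogonalProjectionOnto y : H)
          = (H₁.orthogonalProjectionOnto ((H₃.orthogonalProjectionOnto y : H)) : H) := by rw [hy3]
      rw [this, hp y, hy2, inner_zero_right]
  · -- projection identity → H₂ = H₁ ⊓ H₃
    intro hp
    refine le_antisymm hle ?_
    intro ξ hξ
    have h3 : (H₃.orthogonalProjectionOnto ξ : H) = ξ := Submodule.starProjection_eq_self_iff.2 hξ.2
    have h1 : (H₁.orthogonalProjectionOnto ξ : H) = ξ := Submodule.starProjection_eq_self_iff.2 hξ.1
    have := hp ξ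
    rw [h3, h1] at this
    rw [this]
    exact (H₂.orthogonalProjectionOnto ξ).2
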